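/- Let N₁, N₂, N₃, N₄ be natural numbers and set N = N₁ + N₂ + N₃ + N₄. Assume either N ≥ 5, or N = 4 and N₂ ≤ 3. Then there exists a unique x ∈ (√2, ∞) such that N₁·ω₁(x) + N₂·ω₂(x) + N₃·ω₃(x) + N₄·ω₄(x) = 2π. -/

import Mathlib

open Real

noncomputable section

/-- Apex angle of an elementary decorated triangle of type 1 (Euclidean case,
`ř = 1`, `ě = 1/4`) with apex edge length `x`. -/
def ω₁ (x : ℝ) : ℝ := 2 * Real.arcsin (5 / (4 * x))

/-- Apex angle of an elementary decorated triangle of type 2. -/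
def ω₂ (x : ℝ) : ℝ := 2 * Real.arcsin (1 / x)

/-- Apex angle of an elementary decorated triangle of type 3. -/
def ω₃ (x : ℝ) : ℝ := 2 * Real.arcsin (1 / Real.sqrt (x ^ 2 - 1))

/-- Apex angle of an elementary decorated triangle of type 4. -/
def ω₄ (x : ℝ) : ℝ := Real.arccos ((2 * x ^ 2 - 5) / (2 * x * Real.sqrt (x ^ 2 - 1)))

namespace ApexAux

lemma sqrt_two_facts : (0:ℝ) < Real.sqrt 2 ∧ (1:ℝ) < Real.sqrt 2 ∧ Real.sqrt 2 < 2 ∧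
    (5:ℝ)/4 < Real.sqrt 2 := by
  have h := Real.sq_sqrt (by norm_num : (0:ℝ) ≤ 2)
  have h0 := Real.sqrt_nonneg 2
  refine ⟨by nlinarith, by nlinarith, by nlinarith, by nlinarith⟩

lemma basic_facts {x : ℝ} (hx : Real.sqrt 2 ≤ x) :
    0 < x ∧ 2 ≤ x ^ 2 ∧ 0 < Real.sqrt (x ^ 2 - 1) ∧
      (Real.sqrt (x ^ 2 - 1)) ^ 2 = x ^ 2 - 1 := by
  obtain ⟨h0, h1, -, -⟩ := sqrt_two_facts
  have hx0 : 0 < x := lt_of_lt_of_le h0 hx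
  have hx2 : 2 ≤ x ^ 2 := by
    have h := Real.sq_sqrt (by norm_num : (0:ℝ) ≤ 2)
    nlinarith
  exact ⟨hx0, hx2, Real.sqrt_pos.2 (by nlinarith), Real.sq_sqrt (by nlinarith)⟩

/-- Strict monotonicity of the argument of `arccos` in `ω₄`. -/
lemma garg_lt {a b : ℝ} (ha : Real.sqrt 2 ≤ a) (hab : a < b) :
    (2 * a ^ 2 - 5) / (2 * a * Real.sqrt (a ^ 2 - 1)) <
    (2 * b ^ 2 - 5) / (2 * b * Real.sqrt (b ^ 2 - 1)) := by
  obtain ⟨ha0, ha2, hsa0, hsa2⟩ := basic_facts ha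
  obtain ⟨hb0, hb2, hsb0, hsb2⟩ := basic_facts (le_of_lt (lt_of_le_of_lt ha hab))
  set sa := Real.sqrt (a ^ 2 - 1)
  set sb := Real.sqrt (b ^ 2 - 1)
  rw [div_lt_div_iff₀ (by positivity) (by positivity)]
  rcases le_or_gt 5 (2 * a ^ 2) with h5a | h5a
  · have h5b : 5 < 2 * b ^ 2 := by nlinarith
    have hR : 0 < (2 * b ^ 2 - 5) * (2 * a * sa) := by
      apply mul_pos (by linarith) (by positivity)
    have hL : 0 ≤ (2 * a ^ 2 - 5) * (2 * b * sb) := by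
      apply mul_nonneg (by linarith) (by positivity)
    refine lt_of_pow_lt_pow_left₀ 2 (le_of_lt hR) ?_
    have e1 : ((2 * a ^ 2 - 5) * (2 * b * sb)) ^ 2
        = (2 * a ^ 2 - 5) ^ 2 * (4 * (b ^ 2 * (b ^ 2 - 1))) := by
      rw [mul_pow, mul_pow, mul_pow, hsb2]; ring
    have e2 : ((2 * b ^ 2 - 5) * (2 * a * sa)) ^ 2
        = (2 * b ^ 2 - 5) ^ 2 * (4 * (a ^ 2 * (a ^ 2 - 1))) := by
      rw [mul_pow, mul_pow, mul_pow, hsa2]; ring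
    rw [e1, e2]
    have key : (2 * a ^ 2 - 5) ^ 2 * (b ^ 2 * (b ^ 2 - 1))
        < (2 * b ^ 2 - 5) ^ 2 * (a ^ 2 * (a ^ 2 - 1)) := by
      have hu : a ^ 2 < b ^ 2 := by nlinarith
      nlinarith [sq_nonneg (a ^ 2 - b ^ 2), sq_nonneg (a ^ 2 + b ^ 2),
        mul_pos (lt_of_lt_of_le (by norm_num : (0:ℝ) < 2) ha2) (sub_pos.2 hu)]
    linarith
  · rcases lt_or_ge (2 * b ^ 2) 5 with h5b | h5b
    · have hu : a ^ 2 < b ^ 2 := by nlinarith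
      have key : (5 - 2 * b ^ 2) * (2 * a * sa) < (5 - 2 * a ^ 2) * (2 * b * sb) := by
        have hR : 0 < (5 - 2 * a ^ 2) * (2 * b * sb) := by
          apply mul_pos (by linarith) (by positivity)
        refine lt_of_pow_lt_pow_left₀ 2 (le_of_lt hR) ?_
        have e1 : ((5 - 2 * b ^ 2) * (2 * a * sa)) ^ 2
            = (5 - 2 * b ^ 2) ^ 2 * (4 * (a ^ 2 * (a ^ 2 - 1))) := by
          rw [mul_pow, mul_pow, mul_pow, hsa2]; ring
        have e2 : ((5 - 2 * a ^ 2) * (2 * b * sb)) ^ 2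
            = (5 - 2 * a ^ 2) ^ 2 * (4 * (b ^ 2 * (b ^ 2 - 1))) := by
          rw [mul_pow, mul_pow, mul_pow, hsb2]; ring
        rw [e1, e2]
        have key2 : (5 - 2 * b ^ 2) ^ 2 * (a ^ 2 * (a ^ 2 - 1))
            < (5 - 2 * a ^ 2) ^ 2 * (b ^ 2 * (b ^ 2 - 1)) := by
          have hf : 0 < 25 * a ^ 2 + 25 * b ^ 2 - 16 * a ^ 2 * b ^ 2 - 25 := by
            nlinarith [mul_nonneg (by linarith : (0:ℝ) ≤ 5 - 2 * b ^ 2)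
              (by linarith : (0:ℝ) ≤ 16 * a ^ 2 - 25)]
          nlinarith [mul_pos (sub_pos.2 hu) hf]
        linarith
      nlinarith [key]
    · have hL : (2 * a ^ 2 - 5) * (2 * b * sb) < 0 := by
        apply mul_neg_of_neg_of_pos (by linarith) (by positivity)
      have hR : 0 ≤ (2 * b ^ 2 - 5) * (2 * a * sa) := by
        apply mul_nonneg (by linarith) (by positivity)
      linarith

/-- The argument of `arccos` in `ω₄` lies in `[-1, 1]`. -/
lemma garg_mem {x : ℝ} (hx : Real.sqrt 2 ≤ x) :
    (2 * x ^ 2 - 5) / (2 * x * Real.sqrt (x ^ 2 - 1)) ∈ Set.Icc (-1 : ℝ) 1 := by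
  obtain ⟨hx0, hx2, hs0, hs2⟩ := basic_facts hx
  set s := Real.sqrt (x ^ 2 - 1)
  have hD : 0 < 2 * x * s := by positivity
  constructor
  · rw [le_div_iff₀ hD]
    nlinarith [sq_nonneg (2 * x * s - (5 - 2 * x ^ 2)), mul_pos hD hD, hs2]
  · rw [div_le_one hD]
    nlinarith [sq_nonneg (2 * x * s - (2 * x ^ 2 - 5)), mul_pos hD hD, hs2]

lemma ω₁_lt {a b : ℝ} (ha : Real.sqrt 2 ≤ a) (hab : a < b) : ω₁ b < ω₁ a := by
  obtain ⟨-, -, -, h54⟩ := sqrt_two_facts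
  obtain ⟨ha0, -, -, -⟩ := basic_facts ha
  have hb0 : 0 < b := lt_trans ha0 hab
  have hmema : 5 / (4 * a) ∈ Set.Icc (-1 : ℝ) 1 := by
    constructor
    · exact le_trans (by norm_num : (-1:ℝ) ≤ 0) (by positivity)
    · rw [div_le_one (by positivity)]; nlinarith
  have hmemb : 5 / (4 * b) ∈ Set.Icc (-1 : ℝ) 1 := by
    constructor
    · exact le_trans (by norm_num : (-1:ℝ) ≤ 0) (by positivity)
    · rw [div_le_one (by positivity)]; nlinarith
  have hlt : 5 / (4 * b) < 5 / (4 * a) := by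
    apply div_lt_div_of_pos_left (by norm_num) (by positivity) (by linarith)
  have := Real.strictMonoOn_arcsin hmemb hmema hlt
  simp only [ω₁]; linarith

lemma ω₂_lt {a b : ℝ} (ha : Real.sqrt 2 ≤ a) (hab : a < b) : ω₂ b < ω₂ a := by
  obtain ⟨-, h1, -, -⟩ := sqrt_two_facts
  obtain ⟨ha0, -, -, -⟩ := basic_facts ha
  have hb0 : 0 < b := lt_trans ha0 hab
  have hmema : 1 / a ∈ Set.Icc (-1 : ℝ) 1 := by
    constructor
    · exact le_trans (by norm_num : (-1:ℝ) ≤ 0) (by positivity)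
    · rw [div_le_one ha0]; linarith
  have hmemb : 1 / b ∈ Set.Icc (-1 : ℝ) 1 := by
    constructor
    · exact le_trans (by norm_num : (-1:ℝ) ≤ 0) (by positivity)
    · rw [div_le_one hb0]; linarith
  have hlt : 1 / b < 1 / a := one_div_lt_one_div_of_lt ha0 hab
  have := Real.strictMonoOn_arcsin hmemb hmema hlt
  simp only [ω₂]; linarith

lemma ω₃_lt {a b : ℝ} (ha : Real.sqrt 2 ≤ a) (hab : a < b) : ω₃ b < ω₃ a := by
  obtain ⟨ha0, ha2, hsa0, hsa2⟩ := basic_facts ha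
  obtain ⟨hb0, hb2, hsb0, hsb2⟩ := basic_facts (le_of_lt (lt_of_le_of_lt ha hab))
  have hsa1 : 1 ≤ Real.sqrt (a ^ 2 - 1) := by nlinarith
  have hss : Real.sqrt (a ^ 2 - 1) < Real.sqrt (b ^ 2 - 1) := by
    apply Real.sqrt_lt_sqrt (by nlinarith) (by nlinarith)
  have hmema : 1 / Real.sqrt (a ^ 2 - 1) ∈ Set.Icc (-1 : ℝ) 1 := by
    constructor
    · exact le_trans (by norm_num : (-1:ℝ) ≤ 0) (by positivity)
    · rw [div_le_one hsa0]; linarith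
  have hmemb : 1 / Real.sqrt (b ^ 2 - 1) ∈ Set.Icc (-1 : ℝ) 1 := by
    constructor
    · exact le_trans (by norm_num : (-1:ℝ) ≤ 0) (by positivity)
    · rw [div_le_one hsb0]; linarith
  have hlt : 1 / Real.sqrt (b ^ 2 - 1) < 1 / Real.sqrt (a ^ 2 - 1) :=
    one_div_lt_one_div_of_lt hsa0 hss
  have := Real.strictMonoOn_arcsin hmemb hmema hlt
  simp only [ω₃]; linarith

lemma ω₄_lt {a b : ℝ} (ha : Real.sqrt 2 ≤ a) (hab : a < b) : ω₄ b < ω₄ a := by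
  have hb : Real.sqrt 2 ≤ b := le_of_lt (lt_of_le_of_lt ha hab)
  exact Real.strictAntiOn_arccos (garg_mem ha) (garg_mem hb) (garg_lt ha hab)

lemma ω₂_at : ω₂ (Real.sqrt 2) = π / 2 := by
  obtain ⟨h0, -, -, -⟩ := sqrt_two_facts
  have hs : Real.sqrt 2 * Real.sqrt 2 = 2 := Real.mul_self_sqrt (by norm_num)
  have h12 : (1:ℝ) / Real.sqrt 2 = Real.sqrt 2 / 2 := by
    rw [div_eq_div_iff h0.ne' (by norm_num : (2:ℝ) ≠ 0)]; linarith
  have hpi := Real.pi_pos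
  rw [ω₂, h12, ← Real.sin_pi_div_four,
    Real.arcsin_sin (by linarith) (by linarith)]
  ring

lemma ω₃_at : ω₃ (Real.sqrt 2) = π := by
  have h2 : (Real.sqrt 2) ^ 2 - 1 = 1 := by
    rw [Real.sq_sqrt (by norm_num : (0:ℝ) ≤ 2)]; norm_num
  rw [ω₃, h2, Real.sqrt_one]
  norm_num [Real.arcsin_one]
  ring

lemma ω₁_at : π / 2 < ω₁ (Real.sqrt 2) := by
  obtain ⟨h0, h1, h2, h54⟩ := sqrt_two_facts
  have hs : Real.sqrt 2 * Real.sqrt 2 = 2 := Real.mul_self_sqrt (by norm_num)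
  have hpi := Real.pi_pos
  have hmem1 : Real.sqrt 2 / 2 ∈ Set.Icc (-1 : ℝ) 1 :=
    ⟨by linarith, by linarith⟩
  have hmem2 : 5 / (4 * Real.sqrt 2) ∈ Set.Icc (-1 : ℝ) 1 := by
    constructor
    · exact le_trans (by norm_num : (-1:ℝ) ≤ 0) (by positivity)
    · rw [div_le_one (by positivity)]; nlinarith
  have hlt : Real.sqrt 2 / 2 < 5 / (4 * Real.sqrt 2) := by
    rw [div_lt_div_iff₀ (by norm_num) (by positivity)]; nlinarith
  have harc := Real.strictMonoOn_arcsin hmem1 hmem2 hlt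
  have h4 : Real.arcsin (Real.sqrt 2 / 2) = π / 4 := by
    rw [← Real.sin_pi_div_four, Real.arcsin_sin (by linarith) (by linarith)]
  rw [ω₁]; rw [h4] at harc; linarith

lemma ω₄_at : π / 2 < ω₄ (Real.sqrt 2) := by
  obtain ⟨h0, h1, h2, h54⟩ := sqrt_two_facts
  have hs : Real.sqrt 2 * Real.sqrt 2 = 2 := Real.mul_self_sqrt (by norm_num)
  have h2' : (Real.sqrt 2) ^ 2 - 1 = 1 := by
    rw [Real.sq_sqrt (by norm_num : (0:ℝ) ≤ 2)]; norm_num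
  have harg : (2 * (Real.sqrt 2) ^ 2 - 5) / (2 * Real.sqrt 2 * Real.sqrt ((Real.sqrt 2) ^ 2 - 1))
      = -1 / (2 * Real.sqrt 2) := by
    rw [h2', Real.sqrt_one, Real.sq_sqrt (by norm_num : (0:ℝ) ≤ 2)]
    norm_num
  have hmem : -1 / (2 * Real.sqrt 2) ∈ Set.Icc (-1 : ℝ) 1 := by
    constructor
    · rw [le_div_iff₀ (by positivity : (0:ℝ) < 2 * Real.sqrt 2)]
      nlinarith
    · rw [neg_div]
      exact le_trans (neg_nonpos_of_nonneg (by positivity)) (by norm_num)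
  have hlt : -1 / (2 * Real.sqrt 2) < 0 := by
    rw [neg_div]; exact neg_neg_of_pos (by positivity)
  have hmem0 : (0:ℝ) ∈ Set.Icc (-1 : ℝ) 1 := ⟨by norm_num, by norm_num⟩
  have := Real.strictAntiOn_arccos hmem hmem0 hlt
  rw [Real.arccos_zero] at this
  rw [ω₄, harg]; exact this

lemma arcsin_le_mul {y : ℝ} (h0 : 0 ≤ y) (h1 : y ≤ 1) : Real.arcsin y ≤ π / 2 * y := by
  have h := Real.mul_le_sin (Real.arcsin_nonneg.2 h0) (Real.arcsin_le_pi_div_two y)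
  rw [Real.sin_arcsin (by linarith) h1] at h
  have hpi := Real.pi_pos
  calc Real.arcsin y = π / 2 * (2 / π * Real.arcsin y) := by field_simp
    _ ≤ π / 2 * y := mul_le_mul_of_nonneg_left h (by positivity)

lemma ω₁_le {x : ℝ} (hx : 2 ≤ x) : ω₁ x ≤ 8 / x := by
  have hx0 : (0:ℝ) < x := by linarith
  have hy1 : 5 / (4 * x) ≤ 1 := by rw [div_le_one (by positivity)]; linarith
  have h := arcsin_le_mul (by positivity : (0:ℝ) ≤ 5 / (4 * x)) hy1
  have hpi := Real.pi_lt_four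
  have hpi0 := Real.pi_pos
  have e : π / 2 * (5 / (4 * x)) = 5 * π / (8 * x) := by ring
  rw [ω₁]
  have : 5 * π / (8 * x) ≤ 8 / (2 * x) := by
    rw [div_le_div_iff₀ (by positivity) (by positivity)]; nlinarith
  calc 2 * Real.arcsin (5 / (4 * x)) ≤ 2 * (5 * π / (8 * x)) := by rw [← e]; linarith
    _ ≤ 2 * (8 / (2 * x)) := by linarith
    _ = 8 / x := by field_simp

lemma ω₂_le {x : ℝ} (hx : 2 ≤ x) : ω₂ x ≤ 8 / x := by
  have hx0 : (0:ℝ) < x := by linarith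
  have hy1 : 1 / x ≤ 1 := by rw [div_le_one hx0]; linarith
  have h := arcsin_le_mul (by positivity : (0:ℝ) ≤ 1 / x) hy1
  have hpi := Real.pi_lt_four
  have hpi0 := Real.pi_pos
  have e : π / 2 * (1 / x) = π / (2 * x) := by ring
  rw [ω₂]
  have : π / (2 * x) ≤ 4 / (2 * x) := by
    rw [div_le_div_iff₀ (by positivity) (by positivity)]; nlinarith
  calc 2 * Real.arcsin (1 / x) ≤ 2 * (π / (2 * x)) := by rw [← e]; linarith
    _ ≤ 2 * (4 / (2 * x)) := by linarith
    _ = 4 / x := by field_simp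
    _ ≤ 8 / x := by rw [div_le_div_iff₀ hx0 hx0]; nlinarith

lemma ω₃_le {x : ℝ} (hx : 2 ≤ x) : ω₃ x ≤ 8 / x := by
  have hx0 : (0:ℝ) < x := by linarith
  have hs2 : (Real.sqrt (x ^ 2 - 1)) ^ 2 = x ^ 2 - 1 := Real.sq_sqrt (by nlinarith)
  have hs_ge : x / 2 ≤ Real.sqrt (x ^ 2 - 1) := by
    have h' : (x / 2) ^ 2 ≤ x ^ 2 - 1 := by nlinarith
    calc x / 2 = Real.sqrt ((x / 2) ^ 2) := (Real.sqrt_sq (by positivity)).symm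
      _ ≤ Real.sqrt (x ^ 2 - 1) := Real.sqrt_le_sqrt h'
  have hs0 : 0 < Real.sqrt (x ^ 2 - 1) := lt_of_lt_of_le (by positivity) hs_ge
  have hy1 : 1 / Real.sqrt (x ^ 2 - 1) ≤ 1 := by
    rw [div_le_one hs0]; linarith
  have h := arcsin_le_mul (by positivity : (0:ℝ) ≤ 1 / Real.sqrt (x ^ 2 - 1)) hy1
  have hinv : 1 / Real.sqrt (x ^ 2 - 1) ≤ 2 / x := by
    rw [div_le_div_iff₀ hs0 hx0]; linarith
  have hpi := Real.pi_lt_four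
  have hpi0 := Real.pi_pos
  rw [ω₃]
  calc 2 * Real.arcsin (1 / Real.sqrt (x ^ 2 - 1))
      ≤ 2 * (π / 2 * (1 / Real.sqrt (x ^ 2 - 1))) := by linarith
    _ ≤ 2 * (π / 2 * (2 / x)) := by
        have := mul_le_mul_of_nonneg_left hinv (by positivity : (0:ℝ) ≤ π / 2)
        linarith
    _ = 2 * π / x := by ring
    _ ≤ 8 / x := by
        rw [div_le_div_iff₀ hx0 hx0]; nlinarith

lemma ω₄_le {x : ℝ} (hx : 2 ≤ x) : ω₄ x ≤ 8 / x := by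
  have hx0 : (0:ℝ) < x := by linarith
  have hs2 : (Real.sqrt (x ^ 2 - 1)) ^ 2 = x ^ 2 - 1 := Real.sq_sqrt (by nlinarith)
  have hs0 : 0 < Real.sqrt (x ^ 2 - 1) := Real.sqrt_pos.2 (by nlinarith)
  set s := Real.sqrt (x ^ 2 - 1) with hs
  set g := (2 * x ^ 2 - 5) / (2 * x * s) with hg
  have hg0 : 0 ≤ g := by
    apply div_nonneg (by nlinarith) (by positivity)
  have hle : ω₄ x ≤ π / 2 := Real.arccos_le_pi_div_two.2 hg0
  have hnn : 0 ≤ ω₄ x := Real.arccos_nonneg _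
  have hsin := Real.mul_le_sin hnn hle
  have hsin' : Real.sin (ω₄ x) = Real.sqrt (1 - g ^ 2) := Real.sin_arccos g
  have hg2 : g ^ 2 = (2 * x ^ 2 - 5) ^ 2 / (4 * (x ^ 2 * (x ^ 2 - 1))) := by
    rw [hg, div_pow]
    congr 1
    rw [mul_pow, mul_pow, hs2]; ring
  have hD : (0:ℝ) < 4 * (x ^ 2 * (x ^ 2 - 1)) := by nlinarith
  have h1g : 1 - g ^ 2 ≤ (3 / x) ^ 2 := by
    rw [hg2, one_sub_div hD.ne', div_pow, div_le_div_iff₀ hD (by positivity)]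
    nlinarith
  have hsqrt : Real.sqrt (1 - g ^ 2) ≤ 3 / x := by
    calc Real.sqrt (1 - g ^ 2) ≤ Real.sqrt ((3 / x) ^ 2) := Real.sqrt_le_sqrt h1g
      _ = 3 / x := Real.sqrt_sq (by positivity)
  have hpi := Real.pi_lt_four
  have hpi0 := Real.pi_pos
  have h1 : 2 / π * ω₄ x ≤ 3 / x := by
    rw [hsin'] at hsin; linarith
  calc ω₄ x = π / 2 * (2 / π * ω₄ x) := by field_simp
    _ ≤ π / 2 * (3 / x) := mul_le_mul_of_nonneg_left h1 (by positivity)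
    _ = 3 * π / (2 * x) := by ring
    _ ≤ 8 / x := by rw [div_le_div_iff₀ (by positivity) hx0]; nlinarith

lemma contω₁ : ContinuousOn ω₁ (Set.Ici (Real.sqrt 2)) := by
  have hc : ContinuousOn (fun x : ℝ => 5 / (4 * x)) (Set.Ici (Real.sqrt 2)) := by
    apply ContinuousOn.div continuousOn_const (by fun_prop)
    intro x hx
    obtain ⟨hx0, -, -, -⟩ := basic_facts hx
    positivity
  exact continuousOn_const.mul (Real.continuous_arcsin.comp_continuousOn hc)

lemma contω₂ : ContinuousOn ω₂ (Set.Ici (Real.sqrt 2)) := by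
  have hc : ContinuousOn (fun x : ℝ => 1 / x) (Set.Ici (Real.sqrt 2)) := by
    apply ContinuousOn.div continuousOn_const (by fun_prop)
    intro x hx
    obtain ⟨hx0, -, -, -⟩ := basic_facts hx
    positivity
  exact continuousOn_const.mul (Real.continuous_arcsin.comp_continuousOn hc)

lemma contω₃ : ContinuousOn ω₃ (Set.Ici (Real.sqrt 2)) := by
  have hc : ContinuousOn (fun x : ℝ => 1 / Real.sqrt (x ^ 2 - 1)) (Set.Ici (Real.sqrt 2)) := by
    apply ContinuousOn.div continuousOn_const (by fun_prop)
    intro x hx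
    obtain ⟨-, -, hs0, -⟩ := basic_facts hx
    exact hs0.ne'
  exact continuousOn_const.mul (Real.continuous_arcsin.comp_continuousOn hc)

lemma contω₄ : ContinuousOn ω₄ (Set.Ici (Real.sqrt 2)) := by
  have hc : ContinuousOn
      (fun x : ℝ => (2 * x ^ 2 - 5) / (2 * x * Real.sqrt (x ^ 2 - 1)))
      (Set.Ici (Real.sqrt 2)) := by
    apply ContinuousOn.div (by fun_prop) (by fun_prop)
    intro x hx
    obtain ⟨hx0, -, hs0, -⟩ := basic_facts hx
    positivity
  exact Real.continuous_arccos.comp_continuousOn hc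

end ApexAux

/-- If `N = N₁ + N₂ + N₃ + N₄` elementary decorated triangles of the
four types (with `N ≥ 5`, or `N = 4` and not all of type 2) are glued around a common
apex, there is a unique apex edge length `x ∈ (√2, ∞)` for which the total cone angle
at the apex equals `2π`, so that the resulting decorated `N`-gon is realizable in the
Euclidean plane. -/
theorem exists_unique_apex_parameter
    (N₁ N₂ N₃ N₄ : ℕ)
    (h : 5 ≤ N₁ + N₂ + N₃ + N₄ ∨ (N₁ + N₂ + N₃ + N₄ = 4 ∧ N₂ ≤ 3)) :
    ∃! x : ℝ, x ∈ Set.Ioi (Real.sqrt 2) ∧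
      (N₁ : ℝ) * ω₁ x + (N₂ : ℝ) * ω₂ x + (N₃ : ℝ) * ω₃ x + (N₄ : ℝ) * ω₄ x
        = 2 * π := by
  obtain ⟨hs0, hs1, hs2, -⟩ := ApexAux.sqrt_two_facts
  have hpi := Real.pi_pos
  have hpi3 := Real.pi_gt_three
  have c₁ : (0:ℝ) ≤ N₁ := Nat.cast_nonneg _
  have c₂ : (0:ℝ) ≤ N₂ := Nat.cast_nonneg _
  have c₃ : (0:ℝ) ≤ N₃ := Nat.cast_nonneg _
  have c₄ : (0:ℝ) ≤ N₄ := Nat.cast_nonneg _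
  set F : ℝ → ℝ := fun x =>
    (N₁ : ℝ) * ω₁ x + (N₂ : ℝ) * ω₂ x + (N₃ : ℝ) * ω₃ x + (N₄ : ℝ) * ω₄ x with hF
  have hN4 : 4 ≤ N₁ + N₂ + N₃ + N₄ := by rcases h with h | ⟨h, -⟩ <;> omega
  -- F is strictly decreasing on [√2, ∞)
  have hanti : ∀ a b : ℝ, Real.sqrt 2 ≤ a → a < b → F b < F a := by
    intro a b ha hab
    have h1 := ApexAux.ω₁_lt ha hab
    have h2 := ApexAux.ω₂_lt ha hab
    have h3 := ApexAux.ω₃_lt ha hab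
    have h4 := ApexAux.ω₄_lt ha hab
    have t₁ := mul_le_mul_of_nonneg_left h1.le c₁
    have t₂ := mul_le_mul_of_nonneg_left h2.le c₂
    have t₃ := mul_le_mul_of_nonneg_left h3.le c₃
    have t₄ := mul_le_mul_of_nonneg_left h4.le c₄
    have hpos : 0 < N₁ ∨ 0 < N₂ ∨ 0 < N₃ ∨ 0 < N₄ := by omega
    simp only [hF]
    rcases hpos with hp | hp | hp | hp
    · have hc : (0:ℝ) < N₁ := by exact_mod_cast hp
      have := mul_lt_mul_of_pos_left h1 hc
      linarith
    · have hc : (0:ℝ) < N₂ := by exact_mod_cast hp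
      have := mul_lt_mul_of_pos_left h2 hc
      linarith
    · have hc : (0:ℝ) < N₃ := by exact_mod_cast hp
      have := mul_lt_mul_of_pos_left h3 hc
      linarith
    · have hc : (0:ℝ) < N₄ := by exact_mod_cast hp
      have := mul_lt_mul_of_pos_left h4 hc
      linarith
  -- continuity
  have hcont : ContinuousOn F (Set.Ici (Real.sqrt 2)) := by
    apply ContinuousOn.add
    apply ContinuousOn.add
    apply ContinuousOn.add
    · exact continuousOn_const.mul ApexAux.contω₁
    · exact continuousOn_const.mul ApexAux.contω₂
    · exact continuousOn_const.mul ApexAux.contω₃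
    · exact continuousOn_const.mul ApexAux.contω₄
  -- value at the left endpoint exceeds 2π
  have hval : 2 * π < F (Real.sqrt 2) := by
    have w1 := ApexAux.ω₁_at
    have w2 := ApexAux.ω₂_at
    have w3 := ApexAux.ω₃_at
    have w4 := ApexAux.ω₄_at
    have t₁ := mul_le_mul_of_nonneg_left w1.le c₁
    have t₄ := mul_le_mul_of_nonneg_left w4.le c₄
    have t₃ : (N₃:ℝ) * (π / 2) ≤ (N₃:ℝ) * π :=
      mul_le_mul_of_nonneg_left (le_of_lt (half_lt_self hpi)) c₃
    simp only [hF, w2, w3]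
    rcases h with hN | ⟨hN, hN2⟩
    · have h5 : (5:ℝ) ≤ (N₁:ℝ) + N₂ + N₃ + N₄ := by exact_mod_cast hN
      have hmul := mul_le_mul_of_nonneg_right h5 (le_of_lt (half_pos hpi))
      linarith
    · have h4' : (N₁:ℝ) + N₂ + N₃ + N₄ = 4 := by exact_mod_cast hN
      have hd : 0 < N₁ ∨ 0 < N₃ ∨ 0 < N₄ := by omega
      have hmul : ((N₁:ℝ) + N₂ + N₃ + N₄) * (π / 2) = 4 * (π / 2) := by rw [h4']
      rcases hd with hp | hp | hp
      · have hc : (1:ℝ) ≤ N₁ := by exact_mod_cast hp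
        have := mul_le_mul_of_nonneg_right hc (le_of_lt (sub_pos.2 w1))
        linarith
      · have hc : (1:ℝ) ≤ N₃ := by exact_mod_cast hp
        have := mul_le_mul_of_nonneg_right hc (le_of_lt (half_pos hpi))
        linarith
      · have hc : (1:ℝ) ≤ N₄ := by exact_mod_cast hp
        have := mul_le_mul_of_nonneg_right hc (le_of_lt (sub_pos.2 w4))
        linarith
  -- value at a large point is below 2π
  set n : ℝ := ((N₁ + N₂ + N₃ + N₄ : ℕ) : ℝ) with hn
  have hn0 : (0:ℝ) ≤ n := Nat.cast_nonneg _
  set X : ℝ := 8 * n + 2 with hXdef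
  have hX2 : (2:ℝ) ≤ X := by simp only [hXdef]; linarith
  have hsX : Real.sqrt 2 < X := lt_of_lt_of_le hs2 hX2
  have hFX : F X < 2 * π := by
    have b1 := mul_le_mul_of_nonneg_left (ApexAux.ω₁_le hX2) c₁
    have b2 := mul_le_mul_of_nonneg_left (ApexAux.ω₂_le hX2) c₂
    have b3 := mul_le_mul_of_nonneg_left (ApexAux.ω₃_le hX2) c₃
    have b4 := mul_le_mul_of_nonneg_left (ApexAux.ω₄_le hX2) c₄
    have hsum : (N₁:ℝ) + N₂ + N₃ + N₄ = n := by simp only [hn]; push_cast; ring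
    have hX0 : (0:ℝ) < X := by linarith
    have hdiv : n * (8 / X) < 1 := by
      rw [mul_div_assoc', div_lt_one hX0]
      simp only [hXdef]; linarith
    have hexp : (N₁:ℝ) * (8 / X) + N₂ * (8 / X) + N₃ * (8 / X) + N₄ * (8 / X)
        = n * (8 / X) := by rw [← hsum]; ring
    simp only [hF]
    linarith
  -- existence via the intermediate value theorem
  have hsub : Set.Icc (F X) (F (Real.sqrt 2)) ⊆ F '' Set.Icc (Real.sqrt 2) X :=
    intermediate_value_Icc' (le_of_lt hsX)
      (hcont.mono (Set.Icc_subset_Ici_self))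
  obtain ⟨x, hxmem, hFx⟩ := hsub ⟨le_of_lt hFX, le_of_lt hval⟩
  have hxs : Real.sqrt 2 ≤ x := hxmem.1
  have hxgt : Real.sqrt 2 < x := by
    rcases eq_or_lt_of_le hxs with he | hlt
    · exfalso; rw [← he] at hFx; linarith
    · exact hlt
  refine ⟨x, ⟨Set.mem_Ioi.2 hxgt, hFx⟩, ?_⟩
  rintro y ⟨hy, hFy⟩
  have hFy' : F y = 2 * π := hFy
  have hy' : Real.sqrt 2 < y := Set.mem_Ioi.1 hy
  rcases lt_trichotomy y x with hlt | heq | hgt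
  · have := hanti y x (le_of_lt hy') hlt
    rw [hFx, hFy'] at this; linarith
  · exact heq
  · have := hanti x y (le_of_lt hxgt) hgt
    rw [hFx, hFy'] at this; linarith
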